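/- Let G be a finite simple connected graph of order n ≥ 3. Then the total distinguishing number of G equals the distinguishing number of its subdivision graph: D''(G) = D(S(G)). -/

import Mathlib

open SimpleGraph

/-- The middle graph `M(G)`: vertices are `V(G) ⊕ E(G)`; two edges are adjacent
iff they are distinct and share an endpoint; a vertex and an edge are adjacent
iff the vertex is incident to the edge. -/
def middleGraph {V : Type*} (G : SimpleGraph V) : SimpleGraph (V ⊕ G.edgeSet) :=
  SimpleGraph.fromRel fun x y =>
    match x, y with
    | Sum.inr e, Sum.inr f => e ≠ f ∧ ∃ v, v ∈ (e : Sym2 V) ∧ v ∈ (f : Sym2 V)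
    | Sum.inl v, Sum.inr e => v ∈ (e : Sym2 V)
    | _, _ => False

/-- The subdivision graph `S(G)`: vertices are `V(G) ⊕ E(G)`; `v ∈ V(G)` and
`e ∈ E(G)` are adjacent iff `v` is incident to `e`. -/
def subdivisionGraph {V : Type*} (G : SimpleGraph V) : SimpleGraph (V ⊕ G.edgeSet) :=
  SimpleGraph.fromRel fun x y =>
    match x, y with
    | Sum.inl v, Sum.inr e => v ∈ (e : Sym2 V)
    | _, _ => False

/-- The endline graph `G⁺`: to each vertex `v` of `G` (coded `Sum.inl v`) we attach a new
pendant vertex (coded `Sum.inr v`) via a new (endline) edge. -/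
def endlineGraph {V : Type*} (G : SimpleGraph V) : SimpleGraph (V ⊕ V) :=
  SimpleGraph.fromRel fun x y =>
    match x, y with
    | Sum.inl u, Sum.inl v => G.Adj u v
    | Sum.inl v, Sum.inr u => v = u
    | _, _ => False

/-- A vertex coloring is distinguishing if the only automorphism preserving it is the identity. -/
def IsDistinguishingVertexColoring {V α : Type*} (G : SimpleGraph V) (c : V → α) : Prop :=
  ∀ φ : G ≃g G, (∀ v, c (φ v) = c v) → ∀ v, φ v = v

/-- A proper vertex coloring assigns different colors to adjacent vertices. -/
def IsProperVertexColoring {V α : Type*} (G : SimpleGraph V) (c : V → α) : Prop :=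
  ∀ u v, G.Adj u v → c u ≠ c v

/-- The distinguishing number `D(G)`. -/
noncomputable def distinguishingNumber {V : Type*} (G : SimpleGraph V) : ℕ :=
  sInf {r | ∃ c : V → Fin r, IsDistinguishingVertexColoring G c}

/-- The distinguishing chromatic number `χ_D(G)`. -/
noncomputable def distinguishingChromaticNumber {V : Type*} (G : SimpleGraph V) : ℕ :=
  sInf {r | ∃ c : V → Fin r,
    IsProperVertexColoring G c ∧ IsDistinguishingVertexColoring G c}

/-- An edge coloring is distinguishing if the only automorphism preserving it is the identity. -/
def IsDistinguishingEdgeColoring {V α : Type*} (G : SimpleGraph V) (c : G.edgeSet → α) : Prop :=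
  ∀ φ : G ≃g G, (∀ e, c (φ.mapEdgeSet e) = c e) → ∀ v, φ v = v

/-- A proper edge coloring assigns different colors to distinct edges sharing an endpoint. -/
def IsProperEdgeColoring {V α : Type*} (G : SimpleGraph V) (c : G.edgeSet → α) : Prop :=
  ∀ e f : G.edgeSet, e ≠ f → (∃ v, v ∈ (e : Sym2 V) ∧ v ∈ (f : Sym2 V)) → c e ≠ c f

/-- The distinguishing index `D'(G)`. -/
noncomputable def distinguishingIndex {V : Type*} (G : SimpleGraph V) : ℕ :=
  sInf {r | ∃ c : G.edgeSet → Fin r, IsDistinguishingEdgeColoring G c}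

/-- The distinguishing chromatic index `χ'_D(G)`. -/
noncomputable def distinguishingChromaticIndex {V : Type*} (G : SimpleGraph V) : ℕ :=
  sInf {r | ∃ c : G.edgeSet → Fin r,
    IsProperEdgeColoring G c ∧ IsDistinguishingEdgeColoring G c}

/-- The total distinguishing number `D''(G)`: the least `d` such that there is a (not
necessarily proper) coloring of vertices and edges with `d` colors preserved only by
the identity automorphism. -/
noncomputable def totalDistinguishingNumber {V : Type*} (G : SimpleGraph V) : ℕ :=
  sInf {d | ∃ (cV : V → Fin d) (cE : G.edgeSet → Fin d),
    ∀ φ : G ≃g G,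
      ((∀ v, cV (φ v) = cV v) ∧ (∀ e, cE (φ.mapEdgeSet e) = cE e)) → ∀ v, φ v = v}

namespace TDAux


/-- Our concrete cycle graph on `ZMod m`. -/
def myCycle (m : ℕ) : SimpleGraph (ZMod m) where
  Adj x y := x ≠ y ∧ (y = x + 1 ∨ x = y + 1)
  symm := ⟨by rintro x y ⟨h, h1 | h2⟩ <;> exact ⟨Ne.symm h, by tauto⟩⟩
  loopless := ⟨by rintro x ⟨h, _⟩; exact h rfl⟩

variable {m : ℕ}

lemma two_ne_zero_zmod (hm : 3 ≤ m) : (2 : ZMod m) ≠ 0 := by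
  intro h
  have : ((2 : ℕ) : ZMod m) = 0 := by exact_mod_cast h
  rw [ZMod.natCast_eq_zero_iff] at this
  have := Nat.le_of_dvd (by norm_num) this
  omega

lemma myCycle_adj_iff (hm : 3 ≤ m) {x y : ZMod m} :
    (myCycle m).Adj x y ↔ (y = x + 1 ∨ y = x - 1) := by
  haveI : Fact (1 < m) := ⟨by omega⟩
  constructor
  · rintro ⟨hne, h | h⟩
    · exact Or.inl h
    · right; rw [h]; ring
  · intro h
    refine ⟨?_, ?_⟩
    · rintro rfl
      rcases h with h | h
      · exact one_ne_zero (by linear_combination -h)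
      · exact one_ne_zero (by linear_combination h)
    · rcases h with h | h
      · exact Or.inl h
      · right; rw [h]; ring

lemma myCycle_adj_succ (hm : 3 ≤ m) (x : ZMod m) : (myCycle m).Adj x (x + 1) := by
  rw [myCycle_adj_iff hm]; exact Or.inl rfl

/-- rotation automorphism of the cycle -/
def rotCycle (m : ℕ) : myCycle m ≃g myCycle m where
  toEquiv := Equiv.addRight (1 : ZMod m)
  map_rel_iff' := by
    intro x y
    simp only [Equiv.coe_addRight, myCycle]
    constructor
    · rintro ⟨h, h1 | h2⟩
      · exact ⟨fun hh => h (by rw [hh]), Or.inl (by linear_combination h1)⟩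
      · exact ⟨fun hh => h (by rw [hh]), Or.inr (by linear_combination h2)⟩
    · rintro ⟨h, h1 | h2⟩
      · exact ⟨fun hh => h (by exact add_right_cancel hh), Or.inl (by linear_combination h1)⟩
      · exact ⟨fun hh => h (by exact add_right_cancel hh), Or.inr (by linear_combination h2)⟩

/-- reflection automorphism of the cycle -/
def reflCycle (m : ℕ) : myCycle m ≃g myCycle m where
  toEquiv := ⟨fun x => 1 - x, fun x => 1 - x, fun x => by ring, fun x => by ring⟩
  map_rel_iff' := by
    intro x y
    simp only [Equiv.coe_fn_mk, myCycle]
    constructor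
    · rintro ⟨h, h1 | h2⟩
      · exact ⟨fun hh => h (by linear_combination -hh), Or.inr (by linear_combination h1)⟩
      · exact ⟨fun hh => h (by linear_combination -hh), Or.inl (by linear_combination h2)⟩
    · rintro ⟨h, h1 | h2⟩
      · exact ⟨fun hh => h (by linear_combination -hh), Or.inr (by linear_combination h1)⟩
      · exact ⟨fun hh => h (by linear_combination -hh), Or.inl (by linear_combination h2)⟩



lemma zmod_nat_eq_zero_imp (hm : 3 ≤ m) {k : ℕ} (hk : 0 < k) (h : ((k : ℕ) : ZMod m) = 0) :
    m ≤ k := by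
  rw [ZMod.natCast_eq_zero_iff] at h
  exact Nat.le_of_dvd hk h

lemma cast_inj_of_lt {a b : ℕ} (ha : a < m) (hb : b < m) :
    ((a : ZMod m) = (b : ZMod m)) ↔ a = b := by
  rw [ZMod.natCast_eq_natCast_iff, Nat.ModEq, Nat.mod_eq_of_lt ha, Nat.mod_eq_of_lt hb]

/-- automorphism of the cycle fixing 0 and 1 is the identity -/
lemma cycle_fix (hm : 3 ≤ m) (θ : myCycle m ≃g myCycle m) (h0 : θ 0 = 0) (h1 : θ 1 = 1) :
    ∀ x, θ x = x := by
  haveI : NeZero m := ⟨by omega⟩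
  have key : ∀ k : ℕ, θ (k : ZMod m) = (k : ZMod m) ∧
      θ ((k : ℕ) + 1 : ZMod m) = ((k : ℕ) + 1 : ZMod m) := by
    intro k
    induction k with
    | zero => simpa using ⟨h0, h1⟩
    | succ k ih =>
      obtain ⟨ihk, ihk1⟩ := ih
      refine ⟨by push_cast; push_cast at ihk1; exact ihk1, ?_⟩
      have hadj : (myCycle m).Adj ((k : ZMod m) + 1) ((k : ZMod m) + 1 + 1) :=
        myCycle_adj_succ hm _
      have hadj2 := θ.map_rel_iff.mpr hadj
      rw [ihk1] at hadj2
      rw [myCycle_adj_iff hm] at hadj2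
      rcases hadj2 with h | h
      · push_cast; push_cast at h; exact h
      · exfalso
        have : θ ((k : ZMod m) + 1 + 1) = θ (k : ZMod m) := by
          rw [ihk, h]; ring
        have := θ.injective this
        have : (2 : ZMod m) = 0 := by linear_combination this
        exact two_ne_zero_zmod hm this
  intro x
  have := (key x.val).1
  rwa [ZMod.natCast_zmod_val] at this

/-- the distinguishing 2-coloring of the cycle -/
noncomputable def c0 (m : ℕ) : ZMod m → Fin 2 := fun x =>
  haveI := Classical.dec (x = 0 ∨ x = 1 ∨ x = 3)
  if x = 0 ∨ x = 1 ∨ x = 3 then 0 else 1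

lemma c0_mem_iff {x : ZMod m} : c0 m x = 0 ↔ (x = 0 ∨ x = 1 ∨ x = 3) := by
  unfold c0
  split <;> simp_all

lemma c0_distinguishing (hm : 6 ≤ m) (φ : myCycle m ≃g myCycle m)
    (hpres : ∀ x, c0 m (φ x) = c0 m x) : ∀ x, φ x = x := by
  have hm3 : 3 ≤ m := by omega
  have hmem : ∀ x : ZMod m, (φ x = 0 ∨ φ x = 1 ∨ φ x = 3) ↔ (x = 0 ∨ x = 1 ∨ x = 3) := by
    intro x
    rw [← c0_mem_iff, ← c0_mem_iff, hpres]
  -- basic numerals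
  have h13 : (1 : ZMod m) ≠ 3 := by
    intro h
    have : ((2 : ℕ) : ZMod m) = 0 := by push_cast; linear_combination -h
    have := zmod_nat_eq_zero_imp hm3 (by omega) this; omega
  have hnadj03 : ¬ (myCycle m).Adj 0 3 := by
    rw [myCycle_adj_iff hm3]
    rintro (h | h)
    · exact h13 (by linear_combination -h)
    · have : ((4 : ℕ) : ZMod m) = 0 := by push_cast; linear_combination h
      have := zmod_nat_eq_zero_imp hm3 (by omega) this
      omega
  have hnadj13 : ¬ (myCycle m).Adj 1 3 := by
    rw [myCycle_adj_iff hm3]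
    rintro (h | h)
    · have : ((1 : ℕ) : ZMod m) = 0 := by push_cast; linear_combination h
      have := zmod_nat_eq_zero_imp hm3 (by omega) this
      omega
    · have : ((3 : ℕ) : ZMod m) = 0 := by push_cast; linear_combination h
      have := zmod_nat_eq_zero_imp hm3 (by omega) this
      omega
  have hadj01 : (myCycle m).Adj 0 1 := by
    rw [myCycle_adj_iff hm3]; left; ring
  have hadjφ : (myCycle m).Adj (φ 0) (φ 1) := φ.map_rel_iff.mpr hadj01
  have hφ0 := (hmem 0).mpr (Or.inl rfl)
  have hφ1 := (hmem 1).mpr (Or.inr (Or.inl rfl))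
  have hφ3 := (hmem 3).mpr (Or.inr (Or.inr rfl))
  -- case analysis
  have hcases : (φ 0 = 0 ∧ φ 1 = 1) ∨ (φ 0 = 1 ∧ φ 1 = 0) := by
    rcases hφ0 with h0 | h0 | h0 <;> rcases hφ1 with h1 | h1 | h1
    · exact absurd (h0 ▸ h1 ▸ hadjφ) (myCycle m).irrefl
    · exact Or.inl ⟨h0, h1⟩
    · exact absurd (h0 ▸ h1 ▸ hadjφ) hnadj03
    · exact Or.inr ⟨h0, h1⟩
    · exact absurd (h0 ▸ h1 ▸ hadjφ) (myCycle m).irrefl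
    · exact absurd (h0 ▸ h1 ▸ hadjφ) hnadj13
    · exact absurd (h0 ▸ h1 ▸ hadjφ.symm) hnadj03
    · exact absurd (h0 ▸ h1 ▸ hadjφ.symm) hnadj13
    · exact absurd (h0 ▸ h1 ▸ hadjφ) (myCycle m).irrefl
  rcases hcases with ⟨h0, h1⟩ | ⟨h0, h1⟩
  · exact cycle_fix hm3 φ h0 h1
  · exfalso
    set σ := reflCycle m with hσ
    have hθ : ∀ x, (φ.trans σ) x = x := by
      apply cycle_fix hm3
      · show σ (φ 0) = 0
        rw [h0]; show (1 : ZMod m) - 1 = 0; ring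
      · show σ (φ 1) = 1
        rw [h1]; show (1 : ZMod m) - 0 = 1; ring
    have hφx : φ 3 = 1 - 3 := by
      have h' : σ (φ 3) = 3 := hθ 3
      have h2 : σ.symm (σ (φ 3)) = σ.symm 3 := congrArg _ h'
      rw [σ.symm_apply_apply] at h2
      exact h2.trans rfl
    rcases hφ3 with h | h | h
    · rw [hφx] at h
      have : ((2 : ℕ) : ZMod m) = 0 := by push_cast; linear_combination -h
      have := zmod_nat_eq_zero_imp hm3 (by omega) this; omega
    · rw [hφx] at h
      have : ((3 : ℕ) : ZMod m) = 0 := by push_cast; linear_combination -h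
      have := zmod_nat_eq_zero_imp hm3 (by omega) this; omega
    · rw [hφx] at h
      have : ((5 : ℕ) : ZMod m) = 0 := by push_cast; linear_combination -h
      have := zmod_nat_eq_zero_imp hm3 (by omega) this; omega



section Classification

variable {W : Type*} {H : SimpleGraph W}

/-- two-regularity, packaged -/
def Reg2 (H : SimpleGraph W) : Prop :=
  ∀ w : W, ∃ p : W × W, p.1 ≠ p.2 ∧ ∀ x, H.Adj w x ↔ (x = p.1 ∨ x = p.2)

noncomputable def nb1 (hreg : Reg2 H) (w : W) : W := (Classical.choose (hreg w)).1
noncomputable def nb2 (hreg : Reg2 H) (w : W) : W := (Classical.choose (hreg w)).2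

lemma nb_ne (hreg : Reg2 H) (w : W) : nb1 hreg w ≠ nb2 hreg w :=
  (Classical.choose_spec (hreg w)).1

lemma adj_iff_nb (hreg : Reg2 H) (w x : W) :
    H.Adj w x ↔ (x = nb1 hreg w ∨ x = nb2 hreg w) :=
  (Classical.choose_spec (hreg w)).2 x

noncomputable def other (hreg : Reg2 H) (a b : W) : W :=
  haveI := Classical.dec (a = nb1 hreg b)
  if a = nb1 hreg b then nb2 hreg b else nb1 hreg b

lemma adj_other (hreg : Reg2 H) (a b : W) : H.Adj b (other hreg a b) := by
  unfold other
  split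
  · exact (adj_iff_nb hreg b _).mpr (Or.inr rfl)
  · exact (adj_iff_nb hreg b _).mpr (Or.inl rfl)

lemma other_ne (hreg : Reg2 H) (a b : W) : other hreg a b ≠ a := by
  unfold other
  split
  · next h => rw [h]; exact (nb_ne hreg b).symm
  · next h => exact fun hh => h hh.symm

lemma unique_nb (hreg : Reg2 H) {w x a : W} (hx : H.Adj w x) (ha : H.Adj w a) (hne : x ≠ a) :
    ∀ y, H.Adj w y → y = x ∨ y = a := by
  intro y hy
  rw [adj_iff_nb hreg] at hx ha hy
  rcases hx with rfl | rfl <;> rcases ha with rfl | rfl <;> rcases hy with rfl | rfl <;> tauto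

lemma eq_other (hreg : Reg2 H) {a b x : W} (hab : H.Adj b a) (hx : H.Adj b x) (hne : x ≠ a) :
    x = other hreg a b := by
  have h1 := adj_other hreg a b
  have h2 := other_ne hreg a b
  rcases unique_nb hreg h1 hab (by exact h2) x hx with h | h
  · exact h
  · exact absurd h hne

lemma other_other (hreg : Reg2 H) {a b : W} (hab : H.Adj b a) :
    other hreg (other hreg a b) b = a := by
  exact (eq_other hreg (adj_other hreg a b) hab (Ne.symm (other_ne hreg a b))).symm

/-- the trajectory of the walk around the cycle -/
noncomputable def traj (hreg : Reg2 H) (a0 b0 : W) : ℕ → W × W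
  | 0 => (a0, b0)
  | (k+1) => ((traj hreg a0 b0 k).2, other hreg (traj hreg a0 b0 k).1 (traj hreg a0 b0 k).2)

section Traj

variable (hreg : Reg2 H) (a0 b0 : W)

noncomputable def Ftraj (k : ℕ) : W := (traj hreg a0 b0 k).1

lemma Ftraj_succ (k : ℕ) : Ftraj hreg a0 b0 (k+1) = (traj hreg a0 b0 k).2 := rfl

lemma Ftraj_zero : Ftraj hreg a0 b0 0 = a0 := rfl
lemma Ftraj_one : Ftraj hreg a0 b0 1 = b0 := rfl

lemma Ftraj_rec (k : ℕ) :
    Ftraj hreg a0 b0 (k+2) = other hreg (Ftraj hreg a0 b0 k) (Ftraj hreg a0 b0 (k+1)) := by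
  rw [Ftraj_succ, Ftraj_succ]
  rfl

lemma adjF (hadj0 : H.Adj a0 b0) : ∀ k, H.Adj (Ftraj hreg a0 b0 k) (Ftraj hreg a0 b0 (k+1)) := by
  intro k
  cases k with
  | zero => exact hadj0
  | succ k => rw [Ftraj_rec]; exact adj_other hreg _ _

lemma neF : ∀ k, Ftraj hreg a0 b0 (k+2) ≠ Ftraj hreg a0 b0 k := by
  intro k; rw [Ftraj_rec]; exact other_ne hreg _ _

lemma backF (hadj0 : H.Adj a0 b0) : ∀ k, Ftraj hreg a0 b0 k =
    other hreg (Ftraj hreg a0 b0 (k+2)) (Ftraj hreg a0 b0 (k+1)) := by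
  intro k
  rw [Ftraj_rec]
  exact (other_other hreg ((adjF hreg a0 b0 hadj0 k).symm)).symm

/-- forward determination -/
lemma pair_fwd {i j : ℕ} (h1 : Ftraj hreg a0 b0 i = Ftraj hreg a0 b0 j)
    (h2 : Ftraj hreg a0 b0 (i+1) = Ftraj hreg a0 b0 (j+1)) :
    ∀ t, Ftraj hreg a0 b0 (i+t) = Ftraj hreg a0 b0 (j+t) ∧
      Ftraj hreg a0 b0 (i+t+1) = Ftraj hreg a0 b0 (j+t+1) := by
  intro t
  induction t with
  | zero => exact ⟨h1, h2⟩
  | succ t ih =>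
    refine ⟨ih.2, ?_⟩
    have e1 : i + (t+1) + 1 = (i + t) + 2 := by omega
    have e2 : j + (t+1) + 1 = (j + t) + 2 := by omega
    rw [e1, e2, Ftraj_rec, Ftraj_rec, ih.1, ih.2]

/-- backward determination -/
lemma pair_bwd (hadj0 : H.Adj a0 b0) {i j : ℕ} (hij : i ≤ j) (h1 : Ftraj hreg a0 b0 i = Ftraj hreg a0 b0 j)
    (h2 : Ftraj hreg a0 b0 (i+1) = Ftraj hreg a0 b0 (j+1)) :
    ∀ t, t ≤ i → Ftraj hreg a0 b0 (i-t) = Ftraj hreg a0 b0 (j-t) ∧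
      Ftraj hreg a0 b0 (i-t+1) = Ftraj hreg a0 b0 (j-t+1) := by
  intro t
  induction t with
  | zero => intro _; simpa using ⟨h1, h2⟩
  | succ t ih =>
    intro ht
    obtain ⟨k1, k2⟩ := ih (by omega)
    have e0 : i - (t+1) + 1 = i - t := by omega
    have e0' : j - (t+1) + 1 = j - t := by omega
    refine ⟨?_, by rw [e0, e0']; exact k1⟩
    rw [backF hreg a0 b0 hadj0 (i - (t+1)), backF hreg a0 b0 hadj0 (j - (t+1))]
    rw [show i-(t+1)+2 = i-t+1 by omega, show i-(t+1)+1 = i-t by omega,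
      show j-(t+1)+2 = j-t+1 by omega, show j-(t+1)+1 = j-t by omega, k1, k2]

end Traj

theorem reg2_classification {W : Type*} [Finite W] {H : SimpleGraph W}
    (hreg : Reg2 H) (hc : H.Connected) (hm : 3 ≤ Nat.card W) :
    Nonempty (H ≃g myCycle (Nat.card W)) := by
  classical
  obtain ⟨a0⟩ := hc.nonempty
  set b0 := nb1 hreg a0 with hb0
  have hadj0 : H.Adj a0 b0 := (adj_iff_nb hreg a0 b0).mpr (Or.inl rfl)
  set F : ℕ → W := Ftraj hreg a0 b0 with hF
  -- existence of a period
  have hper_ex : ∃ q, 0 < q ∧ F q = F 0 ∧ F (q+1) = F 1 := by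
    obtain ⟨i, j, hne, hpair⟩ :=
      Finite.exists_ne_map_eq_of_infinite (fun k : ℕ => (F k, F (k+1)))
    simp only [Prod.mk.injEq] at hpair
    rcases Nat.lt_or_ge i j with hij | hij
    · obtain ⟨k1, k2⟩ := pair_bwd hreg a0 b0 hadj0 (le_of_lt hij) hpair.1 hpair.2 i le_rfl
      refine ⟨j - i, by omega, ?_, ?_⟩
      · simpa using k1.symm
      · simpa using k2.symm
    · have hij' : j < i := by omega
      obtain ⟨k1, k2⟩ := pair_bwd hreg a0 b0 hadj0 (le_of_lt hij') hpair.1.symm hpair.2.symm j le_rfl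
      refine ⟨i - j, by omega, ?_, ?_⟩
      · simpa using k1.symm
      · simpa using k2.symm
  set p := Nat.find hper_ex with hpdef
  obtain ⟨hppos, hp0, hp1⟩ := Nat.find_spec hper_ex
  have hpmin : ∀ q, 0 < q → q < p → ¬ (F q = F 0 ∧ F (q+1) = F 1) := by
    intro q hq hqp hcon
    exact Nat.find_min hper_ex hqp ⟨hq, hcon.1, hcon.2⟩
  -- periodicity
  have perF : ∀ k, F (k + p) = F k := by
    intro k
    have := pair_fwd hreg a0 b0 hp0 hp1 k
    rw [Nat.add_comm k p]
    simpa using this.1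
  have Fmod : ∀ k, F k = F (k % p) := by
    intro k
    conv_lhs => rw [show k = k % p + (k / p) * p by rw [Nat.mod_add_div']]
    generalize k / p = n
    induction n with
    | zero => simp
    | succ n ih =>
      rw [show k % p + (n+1) * p = (k % p + n * p) + p by ring, perF, ih]
  -- injectivity on [0, p)
  have injF : ∀ i j, i < j → j < p → F i ≠ F j := by
    intro i j hij hjp heq
    have hne1 : F (i+1) ≠ F (j+1) := by
      intro heq1
      obtain ⟨k1, k2⟩ := pair_bwd hreg a0 b0 hadj0 (le_of_lt hij) heq heq1 i le_rfl
      simp only [Nat.sub_self] at k1 k2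
      exact hpmin (j - i) (by omega) (by omega) ⟨k1.symm, k2.symm⟩
    -- R : reflection identity
    have R : ∀ k, k ≤ j - i → F (j - k) = F (i + k) := by
      intro k
      induction k using Nat.strong_induction_on with
      | _ k ih =>
        match k with
        | 0 => intro _; simpa using heq.symm
        | 1 =>
          intro hk
          have hadjj1 : H.Adj (F j) (F (j-1)) := by
            have := (adjF hreg a0 b0 hadj0 (j-1)).symm
            rwa [show j - 1 + 1 = j by omega] at this
          have hadji1 : H.Adj (F j) (F (i+1)) := by
            rw [← heq]; exact adjF hreg a0 b0 hadj0 i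
          have hadjj2 : H.Adj (F j) (F (j+1)) := adjF hreg a0 b0 hadj0 j
          rcases unique_nb hreg hadjj2 hadji1 (Ne.symm hne1) (F (j-1)) hadjj1 with h | h
          · exfalso
            have := neF hreg a0 b0 (j-1)
            rw [show j - 1 + 2 = j + 1 by omega] at this
            exact this h.symm
          · simpa using h
        | (t+2) =>
          intro hk
          have r1 := ih t (by omega) (by omega)
          have r2 := ih (t+1) (by omega) (by omega)
          have e1 : j - t = (j - (t+2)) + 2 := by omega
          have e2 : j - (t+1) = (j - (t+2)) + 1 := by omega
          have hb := backF hreg a0 b0 hadj0 (j - (t+2))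
          rw [← hF] at hb
          rw [← e1, ← e2] at hb
          rw [hb, r1, r2, show i + (t+1) = (i+t) + 1 by omega]
          rw [show i + (t+2) = (i+t) + 2 by omega]
          exact (Ftraj_rec hreg a0 b0 (i+t)).symm
    -- now derive the contradiction
    rcases Nat.even_or_odd (j - i) with ⟨t, ht⟩ | ⟨t, ht⟩
    · have ht1 : 1 ≤ t := by omega
      have hr := R (t+1) (by omega)
      rw [show j - (t+1) = (i + t - 1) by omega, show i + (t+1) = (i+t-1) + 2 by omega] at hr
      exact neF hreg a0 b0 (i+t-1) hr.symm
    · have hr := R (t+1) (by omega)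
      rw [show j - (t+1) = i + t by omega, show i + (t+1) = (i+t)+1 by omega] at hr
      have := adjF hreg a0 b0 hadj0 (i+t)
      rw [← hF] at this
      rw [← hr] at this
      exact H.irrefl this
  -- surjectivity
  have closedF : ∀ x y, H.Adj x y → (∃ k, F k = x) → (∃ k, F k = y) := by
    rintro x y hxy ⟨k, rfl⟩
    have h1 : H.Adj (F (k+p)) (F (k+p+1)) := adjF hreg a0 b0 hadj0 (k+p)
    have h2 : H.Adj (F (k+p)) (F (k+p-1)) := by
      have := (adjF hreg a0 b0 hadj0 (k+p-1)).symm
      rwa [show k+p-1+1 = k+p by omega] at this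
    have hne : F (k+p+1) ≠ F (k+p-1) := by
      have := neF hreg a0 b0 (k+p-1)
      rwa [show k+p-1+2 = k+p+1 by omega] at this
    have hx : H.Adj (F (k+p)) y := by rw [perF]; exact hxy
    rcases unique_nb hreg h1 h2 hne y hx with h | h
    · exact ⟨k+p+1, h.symm⟩
    · exact ⟨k+p-1, h.symm⟩
  have reachF : ∀ y, ∃ k, F k = y := by
    have aux : ∀ (x y : W), H.Walk x y → (∃ k, F k = x) → (∃ k, F k = y) := by
      intro x y w
      induction w with
      | nil => exact id
      | cons h pw ih => intro hx; exact ih (closedF _ _ h hx)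
    intro y
    obtain ⟨w⟩ := hc.preconnected a0 y
    exact aux a0 y w ⟨0, rfl⟩
  have surjF : ∀ y, ∃ k, k < p ∧ F k = y := by
    intro y
    obtain ⟨k, hk⟩ := reachF y
    exact ⟨k % p, Nat.mod_lt _ hppos, by rw [← Fmod]; exact hk⟩
  -- cardinality
  have hcard : p = Nat.card W := by
    have hbij : Function.Bijective (fun k : Fin p => F k.val) := by
      constructor
      · rintro ⟨i, hi⟩ ⟨j, hj⟩ h
        simp only at h
        rcases lt_trichotomy i j with hij | hij | hij
        · exact absurd h (injF i j hij hj)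
        · exact Fin.ext hij
        · exact absurd h.symm (injF j i hij hi)
      · intro y
        obtain ⟨k, hk, hky⟩ := surjF y
        exact ⟨⟨k, hk⟩, hky⟩
    have := Nat.card_eq_of_bijective _ hbij
    simpa using this
  have hp3 : 3 ≤ p := by rw [hcard]; exact hm
  haveI : NeZero p := ⟨by omega⟩
  -- the bijection from ZMod p
  set f : ZMod p → W := fun i => F i.val with hfdef
  have hfinj : Function.Injective f := by
    intro i j h
    have hvv : i.val = j.val := by
      by_contra hne
      rcases lt_trichotomy i.val j.val with hij | hij | hij
      · exact injF i.val j.val hij (ZMod.val_lt j) h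
      · exact hne hij
      · exact injF j.val i.val hij (ZMod.val_lt i) h.symm
    calc i = ((i.val : ℕ) : ZMod p) := (ZMod.natCast_zmod_val i).symm
    _ = ((j.val : ℕ) : ZMod p) := by rw [hvv]
    _ = j := ZMod.natCast_zmod_val j
  have hfsurj : Function.Surjective f := by
    intro y
    obtain ⟨k, hk, hky⟩ := surjF y
    refine ⟨(k : ZMod p), ?_⟩
    show F ((k : ZMod p)).val = y
    rw [ZMod.val_cast_of_lt hk]
    exact hky
  have hFzmod : ∀ (i : ZMod p) (a : ℕ), ((a : ZMod p) = i) → f i = F a := by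
    intro i a ha
    have : i.val % p = a % p := by
      apply (ZMod.natCast_eq_natCast_iff' _ _ _).mp
      rw [ZMod.natCast_zmod_val, ha]
    show F i.val = F a
    rw [Fmod i.val, Fmod a, this]
  have hstep : ∀ i : ZMod p, H.Adj (f i) (f (i+1)) := by
    intro i
    have h1 : f (i+1) = F (i.val + 1) := by
      apply hFzmod
      push_cast
      rw [ZMod.natCast_zmod_val]
    have h0 : f i = F i.val := rfl
    rw [h0, h1]
    exact adjF hreg a0 b0 hadj0 i.val
  have hstep' : ∀ i : ZMod p, H.Adj (f i) (f (i-1)) := by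
    intro i
    have := (hstep (i-1)).symm
    rwa [show i - 1 + 1 = i by ring] at this
  have iso : myCycle p ≃g H := by
    refine ⟨Equiv.ofBijective f ⟨hfinj, hfsurj⟩, ?_⟩
    intro i j
    show H.Adj (f i) (f j) ↔ (myCycle p).Adj i j
    rw [myCycle_adj_iff hp3]
    constructor
    · intro hadj
      have hnee : f (i+1) ≠ f (i-1) := by
        intro h
        have := hfinj h
        have h2 : (2 : ZMod p) = 0 := by linear_combination this
        exact two_ne_zero_zmod hp3 h2
      rcases unique_nb hreg (hstep i) (hstep' i) hnee (f j) hadj with h | h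
      · exact Or.inl (hfinj h)
      · exact Or.inr (hfinj h)
    · rintro (rfl | rfl)
      · exact hstep i
      · exact hstep' i
  exact ⟨hcard ▸ iso.symm⟩

end Classification



section Subdivision

open Sum

variable {V : Type*} {G : SimpleGraph V}

lemma sd_lr {v : V} {e : G.edgeSet} :
    (subdivisionGraph G).Adj (inl v) (inr e) ↔ v ∈ (e : Sym2 V) := by
  rw [subdivisionGraph, SimpleGraph.fromRel_adj]
  simp

lemma sd_rl {v : V} {e : G.edgeSet} :
    (subdivisionGraph G).Adj (inr e) (inl v) ↔ v ∈ (e : Sym2 V) := by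
  rw [(subdivisionGraph G).adj_comm]; exact sd_lr

lemma sd_ll {u v : V} : ¬ (subdivisionGraph G).Adj (inl u) (inl v) := by
  rw [subdivisionGraph, SimpleGraph.fromRel_adj]
  simp

lemma sd_rr {e f : G.edgeSet} : ¬ (subdivisionGraph G).Adj (inr e) (inr f) := by
  rw [subdivisionGraph, SimpleGraph.fromRel_adj]
  simp

lemma sd_sides {x y : V ⊕ G.edgeSet} (h : (subdivisionGraph G).Adj x y) :
    x.isLeft = !y.isLeft := by
  cases x with
  | inl u =>
    cases y with
    | inl v => exact absurd h sd_ll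
    | inr f => rfl
  | inr e =>
    cases y with
    | inl v => rfl
    | inr f => exact absurd h sd_rr

lemma edge_endpoints (e : G.edgeSet) : ∃ u v, G.Adj u v ∧ (e : Sym2 V) = s(u, v) := by
  obtain ⟨z, hz⟩ := e
  induction z using Sym2.ind with
  | _ u v => exact ⟨u, v, hz, rfl⟩

lemma walk_lift {u v : V} (w : G.Walk u v) :
    (subdivisionGraph G).Reachable (inl u) (inl v) := by
  induction w with
  | nil => exact SimpleGraph.Reachable.refl _
  | cons h pw ih =>
    rename_i a b c
    refine SimpleGraph.Reachable.trans ?_ ih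
    have h1 : (subdivisionGraph G).Adj (inl a) (inr ⟨s(a, b), h⟩) := by
      rw [sd_lr]; exact Sym2.mem_mk_left a b
    have h2 : (subdivisionGraph G).Adj (inr (⟨s(a, b), h⟩ : G.edgeSet)) (inl b) := by
      rw [sd_rl]; exact Sym2.mem_mk_right a b
    exact (h1.reachable).trans h2.reachable

lemma sd_connected (hconn : G.Connected) : (subdivisionGraph G).Connected := by
  obtain ⟨v0⟩ := hconn.nonempty
  have reach : ∀ x : V ⊕ G.edgeSet, (subdivisionGraph G).Reachable x (inl v0) := by
    intro x
    cases x with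
    | inl u => obtain ⟨w⟩ := hconn.preconnected u v0; exact walk_lift w
    | inr e =>
      obtain ⟨u, v, huv, he⟩ := edge_endpoints e
      have h1 : (subdivisionGraph G).Adj (inr e) (inl u) := by
        rw [sd_rl, he]; exact Sym2.mem_mk_left u v
      obtain ⟨w⟩ := hconn.preconnected u v0
      exact h1.reachable.trans (walk_lift w)
  rw [SimpleGraph.connected_iff]
  exact ⟨fun x y => (reach x).trans (reach y).symm, ⟨inl v0⟩⟩

lemma adj_invariant {W' : Type*} {H : SimpleGraph W'} {g : W' → Bool}
    (h : ∀ x y, H.Adj x y → g x = g y) (hp : H.Preconnected) (x y : W') : g x = g y := by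
  have aux : ∀ (a b : W'), H.Walk a b → g a = g b := by
    intro a b w
    induction w with
    | nil => rfl
    | cons hadj pw ih => exact (h _ _ hadj).trans ih
  obtain ⟨w⟩ := hp x y
  exact aux x y w

/-- Step A: dichotomy -/
lemma side_dichotomy (hconn : G.Connected) (ψ : subdivisionGraph G ≃g subdivisionGraph G) :
    (∀ x, (ψ x).isLeft = x.isLeft) ∨ (∀ x, (ψ x).isLeft = !x.isLeft) := by
  set g : V ⊕ G.edgeSet → Bool := fun x => ((ψ x).isLeft == x.isLeft) with hg
  have hadj : ∀ x y, (subdivisionGraph G).Adj x y → g x = g y := by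
    intro x y h
    have h1 := sd_sides (ψ.map_rel_iff.mpr h)
    have h2 := sd_sides h
    show ((ψ x).isLeft == x.isLeft) = ((ψ y).isLeft == y.isLeft)
    rw [h1, h2]
    cases (ψ y).isLeft <;> cases y.isLeft <;> rfl
  have hpre := (sd_connected hconn).preconnected
  obtain ⟨v0⟩ := hconn.nonempty
  cases hb : g (inl v0) with
  | true =>
    left
    intro x
    have := (adj_invariant hadj hpre x (inl v0)).trans hb
    exact eq_of_beq this
  | false =>
    right
    intro x
    have := (adj_invariant hadj hpre x (inl v0)).trans hb
    have hne : (ψ x).isLeft ≠ x.isLeft := ne_of_beq_false this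
    show (ψ x).isLeft = !x.isLeft
    cases h1 : (ψ x).isLeft <;> cases h2 : x.isLeft <;> simp_all
  
lemma sym2_eq_of_mems {x y : V} {z : Sym2 V} (hne : x ≠ y) (hx : x ∈ z) (hy : y ∈ z) :
    z = s(x, y) :=
  Sym2.eq_of_ne_mem hne hx hy (Sym2.mem_mk_left x y) (Sym2.mem_mk_right x y)

/-- vertex component of a side-preserving automorphism preserves adjacency -/
lemma vm_adj (ψ : subdivisionGraph G ≃g subdivisionGraph G)
    (vm : V → V) (hvm : ∀ v, ψ (inl v) = inl (vm v)) {u v : V} (h : G.Adj u v) :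
    G.Adj (vm u) (vm v) := by
  have hinj : Function.Injective vm := by
    intro a b hab
    have : ψ (inl a) = ψ (inl b) := by rw [hvm a, hvm b, hab]
    exact Sum.inl.inj (ψ.injective this)
  set e : G.edgeSet := ⟨s(u, v), h⟩ with he
  have h1 : (subdivisionGraph G).Adj (inl u) (inr e) := by
    rw [sd_lr]; exact Sym2.mem_mk_left u v
  have h2 : (subdivisionGraph G).Adj (inl v) (inr e) := by
    rw [sd_lr]; exact Sym2.mem_mk_right u v
  have h1' := ψ.map_rel_iff.mpr h1
  have h2' := ψ.map_rel_iff.mpr h2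
  rw [hvm u] at h1'
  rw [hvm v] at h2'
  cases hf : ψ (inr e) with
  | inl w =>
    rw [hf] at h1'
    exact absurd h1' sd_ll
  | inr f =>
    rw [hf] at h1' h2'
    rw [sd_lr] at h1' h2'
    have hne : vm u ≠ vm v := fun hh => (G.ne_of_adj h) (hinj hh)
    have : (f : Sym2 V) = s(vm u, vm v) := sym2_eq_of_mems hne h1' h2'
    have hmem := f.2
    rw [this, SimpleGraph.mem_edgeSet] at hmem
    exact hmem

/-- Step B: a side-preserving automorphism of S(G) is induced by an automorphism of G -/
lemma side_preserving_induced (ψ : subdivisionGraph G ≃g subdivisionGraph G)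
    (hψ : ∀ x, (ψ x).isLeft = x.isLeft) :
    ∃ φ : G ≃g G, (∀ v, ψ (inl v) = inl (φ v)) ∧
      (∀ e, ψ (inr e) = inr (φ.mapEdgeSet e)) := by
  classical
  have hψ' : ∀ x, (ψ.symm x).isLeft = x.isLeft := by
    intro x
    have := hψ (ψ.symm x)
    rw [ψ.apply_symm_apply] at this
    exact this.symm
  have hl : ∀ v, ∃ w, ψ (inl v) = inl w := by
    intro v
    cases h : ψ (inl v) with
    | inl w => exact ⟨w, rfl⟩
    | inr f => have := hψ (inl v); rw [h] at this; simp at this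
  have hl' : ∀ v, ∃ w, ψ.symm (inl v) = inl w := by
    intro v
    cases h : ψ.symm (inl v) with
    | inl w => exact ⟨w, rfl⟩
    | inr f => have := hψ' (inl v); rw [h] at this; simp at this
  choose vm hvm using hl
  choose vm' hvm' using hl'
  have hleft : ∀ v, vm' (vm v) = v := by
    intro v
    have : ψ.symm (inl (vm v)) = inl (vm' (vm v)) := hvm' (vm v)
    rw [← hvm v, ψ.symm_apply_apply] at this
    exact (Sum.inl.inj this).symm
  have hright : ∀ v, vm (vm' v) = v := by
    intro v
    have : ψ (inl (vm' v)) = inl (vm (vm' v)) := hvm (vm' v)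
    rw [← hvm' v, ψ.apply_symm_apply] at this
    exact (Sum.inl.inj this).symm
  have hadj1 : ∀ {u v}, G.Adj u v → G.Adj (vm u) (vm v) := fun h => vm_adj ψ vm hvm h
  have hadj2 : ∀ {u v}, G.Adj u v → G.Adj (vm' u) (vm' v) := fun h => vm_adj ψ.symm vm' hvm' h
  set φ : G ≃g G :=
    { toFun := vm
      invFun := vm'
      left_inv := hleft
      right_inv := hright
      map_rel_iff' := by
        intro u v
        show G.Adj (vm u) (vm v) ↔ G.Adj u v
        constructor
        · intro h
          have := hadj2 h
          rwa [hleft u, hleft v] at this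
        · exact hadj1 } with hφ
  refine ⟨φ, hvm, ?_⟩
  intro e
  obtain ⟨u, v, huv, he⟩ := edge_endpoints e
  have h1 : (subdivisionGraph G).Adj (inl u) (inr e) := by
    rw [sd_lr, he]; exact Sym2.mem_mk_left u v
  have h2 : (subdivisionGraph G).Adj (inl v) (inr e) := by
    rw [sd_lr, he]; exact Sym2.mem_mk_right u v
  have h1' := ψ.map_rel_iff.mpr h1
  have h2' := ψ.map_rel_iff.mpr h2
  rw [hvm u] at h1'
  rw [hvm v] at h2'
  cases hf : ψ (inr e) with
  | inl w => rw [hf] at h1'; exact absurd h1' sd_ll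
  | inr f =>
    rw [hf] at h1' h2'
    rw [sd_lr] at h1' h2'
    have hne : vm u ≠ vm v := by
      intro hh
      exact (G.ne_of_adj huv) (by rw [← hleft u, hh, hleft v])
    have hfe : (f : Sym2 V) = s(vm u, vm v) := sym2_eq_of_mems hne h1' h2'
    congr 1
    apply Subtype.ext
    show (f : Sym2 V) = (φ.mapEdgeSet e : Sym2 V)
    have : (φ.mapEdgeSet e : Sym2 V) = Sym2.map φ (e : Sym2 V) := rfl
    rw [hfe, this, he, Sym2.map_pair_eq]
    rfl

/-- Reg2 for the subdivision graph, given a side-swapping automorphism -/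
lemma sd_reg2 (ψ0 : subdivisionGraph G ≃g subdivisionGraph G)
    (hψ0 : ∀ x, (ψ0 x).isLeft = !x.isLeft) : Reg2 (subdivisionGraph G) := by
  have hnbr : ∀ e : G.edgeSet, ∃ p : (V ⊕ G.edgeSet) × (V ⊕ G.edgeSet), p.1 ≠ p.2 ∧
      ∀ x, (subdivisionGraph G).Adj (inr e) x ↔ (x = p.1 ∨ x = p.2) := by
    intro e
    obtain ⟨u, v, huv, he⟩ := edge_endpoints e
    refine ⟨(inl u, inl v), by simp [G.ne_of_adj huv], ?_⟩
    intro x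
    cases x with
    | inl w =>
      rw [sd_rl, he, Sym2.mem_iff]
      simp
    | inr f =>
      simp only [iff_false, reduceCtorEq, or_self]
      exact fun h => sd_rr h
  intro w
  cases w with
  | inr e => exact hnbr e
  | inl v =>
    obtain ⟨e, hev⟩ : ∃ e, ψ0 (inl v) = inr e := by
      cases h : ψ0 (inl v) with
      | inl w => have := hψ0 (inl v); rw [h] at this; simp at this
      | inr f => exact ⟨f, rfl⟩
    obtain ⟨p, hp12, hp⟩ := hnbr e
    refine ⟨(ψ0.symm p.1, ψ0.symm p.2), fun h => hp12 (ψ0.symm.injective h), ?_⟩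
    intro x
    have : (subdivisionGraph G).Adj (inl v) x ↔ (subdivisionGraph G).Adj (inr e) (ψ0 x) := by
      rw [← hev]
      exact (ψ0.map_rel_iff (a := inl v) (b := x)).symm
    rw [this, hp (ψ0 x)]
    constructor
    · rintro (h | h)
      · left; rw [← h, ψ0.symm_apply_apply]
      · right; rw [← h, ψ0.symm_apply_apply]
    · rintro (rfl | rfl)
      · left; rw [ψ0.apply_symm_apply]
      · right; rw [ψ0.apply_symm_apply]

end Subdivision



section Main

open Sum

variable {V : Type*} {G : SimpleGraph V}

lemma mem_map_iff (φ : G ≃g G) (e : G.edgeSet) (v : V) :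
    φ v ∈ (φ.mapEdgeSet e : Sym2 V) ↔ v ∈ (e : Sym2 V) := by
  show φ v ∈ Sym2.map ⇑φ (e : Sym2 V) ↔ _
  rw [Sym2.mem_map]
  constructor
  · rintro ⟨a, ha, haeq⟩
    rwa [← φ.injective haeq]
  · intro hv
    exact ⟨v, hv, rfl⟩

/-- the induced automorphism of `S(G)` from an automorphism of `G` -/
def inducedSD (φ : G ≃g G) : subdivisionGraph G ≃g subdivisionGraph G where
  toEquiv := Equiv.sumCongr φ.toEquiv φ.mapEdgeSet
  map_rel_iff' := by
    intro x y
    cases x with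
    | inl u =>
      cases y with
      | inl v =>
        simp only [Equiv.sumCongr_apply, Sum.map_inl]
        exact iff_of_false sd_ll sd_ll
      | inr f =>
        simp only [Equiv.sumCongr_apply, Sum.map_inl, Sum.map_inr]
        rw [sd_lr, sd_lr]
        exact mem_map_iff φ f u
    | inr e =>
      cases y with
      | inl v =>
        simp only [Equiv.sumCongr_apply, Sum.map_inl, Sum.map_inr]
        rw [sd_rl, sd_rl]
        exact mem_map_iff φ e v
      | inr f =>
        simp only [Equiv.sumCongr_apply, Sum.map_inr]
        exact iff_of_false sd_rr sd_rr

lemma inducedSD_inl (φ : G ≃g G) (v : V) : inducedSD φ (inl v) = inl (φ v) := rfl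
lemma inducedSD_inr (φ : G ≃g G) (e : G.edgeSet) :
    inducedSD φ (inr e) = inr (φ.mapEdgeSet e) := rfl

/-- easy direction: a distinguishing coloring of S(G) restricts to a total coloring of G -/
lemma s_mem_total {r : ℕ} (c : V ⊕ G.edgeSet → Fin r)
    (hc : IsDistinguishingVertexColoring (subdivisionGraph G) c) :
    ∃ (cV : V → Fin r) (cE : G.edgeSet → Fin r),
      ∀ φ : G ≃g G,
        ((∀ v, cV (φ v) = cV v) ∧ (∀ e, cE (φ.mapEdgeSet e) = cE e)) → ∀ v, φ v = v := by
  refine ⟨fun v => c (inl v), fun e => c (inr e), ?_⟩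
  rintro φ ⟨hV, hE⟩ v
  have hpres : ∀ x, c (inducedSD φ x) = c x := by
    intro x
    cases x with
    | inl u => rw [inducedSD_inl]; exact hV u
    | inr e => rw [inducedSD_inr]; exact hE e
  have := hc (inducedSD φ) hpres (inl v)
  rw [inducedSD_inl] at this
  exact Sum.inl.inj this

/-- a side-preserving automorphism is the identity when G has no nontrivial automorphism
preserving the given colorings -/
lemma side_preserving_ptwise {d : ℕ} (cV : V → Fin d) (cE : G.edgeSet → Fin d)
    (hd : ∀ φ : G ≃g G,
      ((∀ v, cV (φ v) = cV v) ∧ (∀ e, cE (φ.mapEdgeSet e) = cE e)) → ∀ v, φ v = v)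
    (ψ : subdivisionGraph G ≃g subdivisionGraph G)
    (hside : ∀ x, (ψ x).isLeft = x.isLeft)
    (hpres : ∀ x, Sum.elim cV cE (ψ x) = Sum.elim cV cE x) : ∀ x, ψ x = x := by
  obtain ⟨φ, hφV, hφE⟩ := side_preserving_induced ψ hside
  have hidV : ∀ v, φ v = v := by
    apply hd φ
    constructor
    · intro v
      have := hpres (inl v)
      rw [hφV v] at this
      simpa using this
    · intro e
      have := hpres (inr e)
      rw [hφE e] at this
      simpa using this
  have hφid : (⇑φ : V → V) = id := funext hidV
  intro x
  cases x with
  | inl v => rw [hφV v, hidV v]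
  | inr e =>
    rw [hφE e]
    congr 1
    apply Subtype.ext
    show Sym2.map ⇑φ (e : Sym2 V) = (e : Sym2 V)
    rw [hφid, Sym2.map_id]
    rfl

lemma rotCycle_apply {m : ℕ} (i : ZMod m) : rotCycle m i = i + 1 := rfl

/-- the swap case: G.edgeSet has at least as many elements, S(G) is a cycle -/
lemma swap_case [Fintype V] (hconn : G.Connected) (hcard : 3 ≤ Fintype.card V)
    (ψ0 : subdivisionGraph G ≃g subdivisionGraph G)
    (hψ0 : ∀ x, (ψ0 x).isLeft = !x.isLeft) :
    (∃ c : V ⊕ G.edgeSet → Fin 2, IsDistinguishingVertexColoring (subdivisionGraph G) c) ∧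
      (∃ φ : G ≃g G, ¬ ∀ v, φ v = v) := by
  classical
  haveI : Finite (Sym2 V) := by infer_instance
  haveI : Finite (V ⊕ G.edgeSet) := by infer_instance
  set M := Nat.card (V ⊕ G.edgeSet) with hM
  -- injection from V into the edge set
  have hι : ∀ v : V, ∃ e : G.edgeSet, ψ0 (inl v) = inr e := by
    intro v
    cases h : ψ0 (inl v) with
    | inl w => have := hψ0 (inl v); rw [h] at this; simp at this
    | inr f => exact ⟨f, rfl⟩
  choose ι hιs using hι
  have hιinj : Function.Injective ι := by
    intro a b hab
    have : ψ0 (inl a) = ψ0 (inl b) := by rw [hιs a, hιs b, hab]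
    exact Sum.inl.inj (ψ0.injective this)
  have hcards : 3 ≤ Nat.card V := by
    rw [Nat.card_eq_fintype_card]; exact hcard
  have hM6 : 6 ≤ M := by
    rw [hM, Nat.card_sum]
    have := Nat.card_le_card_of_injective ι hιinj
    omega
  have hM3 : 3 ≤ M := by omega
  -- S(G) is 2-regular, hence a cycle
  obtain ⟨κ⟩ := reg2_classification (sd_reg2 ψ0 hψ0) (sd_connected hconn) hM3
  constructor
  · -- the distinguishing 2-coloring
    refine ⟨fun x => c0 M (κ x), ?_⟩
    intro ψ hpres x
    set θ : myCycle M ≃g myCycle M := (κ.symm.trans ψ).trans κ with hθ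
    have hθpres : ∀ i, c0 M (θ i) = c0 M i := by
      intro i
      show c0 M (κ (ψ (κ.symm i))) = c0 M i
      have := hpres (κ.symm i)
      dsimp only at this
      rw [κ.apply_symm_apply] at this
      exact this
    have hθid := c0_distinguishing hM6 θ hθpres (κ x)
    have : κ (ψ (κ.symm (κ x))) = κ x := hθid
    rw [κ.symm_apply_apply] at this
    exact κ.injective this
  · -- a nontrivial automorphism of G exists
    by_contra hno
    push_neg at hno
    have hsp : ∀ (ψ : subdivisionGraph G ≃g subdivisionGraph G),
        (∀ x, (ψ x).isLeft = x.isLeft) → ∀ x, ψ x = x := by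
      intro ψ hside
      exact side_preserving_ptwise (fun _ => (0 : Fin 1)) (fun _ => 0)
        (fun φ _ => hno φ) ψ hside (fun x => Subsingleton.elim _ _)
    set ρ : subdivisionGraph G ≃g subdivisionGraph G := (κ.trans (rotCycle M)).trans κ.symm
      with hρdef
    have hρ : ∀ i : ZMod M, ρ (κ.symm i) = κ.symm (i + 1) := by
      intro i
      show κ.symm (rotCycle M (κ (κ.symm i))) = _
      rw [κ.apply_symm_apply]
      rfl
    rcases side_dichotomy hconn ρ with hpre | hswp
    · have := hsp ρ hpre (κ.symm 0)
      rw [hρ 0] at this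
      have h10 : (0 : ZMod M) + 1 = 0 := κ.symm.injective this
      haveI : Fact (1 < M) := ⟨by omega⟩
      exact one_ne_zero (α := ZMod M) (by linear_combination h10)
    · have hpre2 : ∀ x, ((ρ.trans ρ) x).isLeft = x.isLeft := by
        intro x
        show (ρ (ρ x)).isLeft = _
        rw [hswp (ρ x), hswp x, Bool.not_not]
      have h2 : ρ (ρ (κ.symm 0)) = κ.symm 0 := hsp (ρ.trans ρ) hpre2 (κ.symm 0)
      rw [hρ 0, hρ (0+1)] at h2
      have h20 : (0 : ZMod M) + 1 + 1 = 0 := κ.symm.injective h2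
      exact two_ne_zero_zmod hM3 (by linear_combination h20)
  
end Main



end TDAux

open TDAux Sum in
/-- For a finite simple connected graph `G` of order `≥ 3`,
`D''(G) = D(S(G))`. -/
theorem totalDistinguishingNumber_eq_distinguishingNumber_subdivision
    {V : Type*} [Fintype V] (G : SimpleGraph V)
    (hconn : G.Connected) (hcard : 3 ≤ Fintype.card V) :
    totalDistinguishingNumber G = distinguishingNumber (subdivisionGraph G) := by
  classical
  haveI : Finite (Sym2 V) := by infer_instance
  haveI : Finite (V ⊕ G.edgeSet) := by infer_instance
  set SSet : Set ℕ :=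
    {r | ∃ c : V ⊕ G.edgeSet → Fin r, IsDistinguishingVertexColoring (subdivisionGraph G) c}
    with hSSet
  set TSet : Set ℕ :=
    {d | ∃ (cV : V → Fin d) (cE : G.edgeSet → Fin d),
      ∀ φ : G ≃g G,
        ((∀ v, cV (φ v) = cV v) ∧ (∀ e, cE (φ.mapEdgeSet e) = cE e)) → ∀ v, φ v = v}
    with hTSet
  have hsub : ∀ r ∈ SSet, r ∈ TSet := by
    rintro r ⟨c, hc⟩
    exact s_mem_total c hc
  have hSne : SSet.Nonempty := by
    set N := Nat.card (V ⊕ G.edgeSet) with hN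
    refine ⟨N, (Finite.equivFin (V ⊕ G.edgeSet)).toFun, ?_⟩
    intro ψ hpres x
    exact (Finite.equivFin (V ⊕ G.edgeSet)).injective (hpres x)
  have key : ∀ d ∈ TSet, distinguishingNumber (subdivisionGraph G) ≤ d := by
    rintro d ⟨cV, cE, hd⟩
    by_cases hsw : ∃ ψ : subdivisionGraph G ≃g subdivisionGraph G,
        ∃ x, (ψ x).isLeft ≠ x.isLeft
    · obtain ⟨ψ0, x0, hx0⟩ := hsw
      rcases side_dichotomy hconn ψ0 with hpre | hψ0
      · exact absurd (hpre x0) hx0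
      obtain ⟨⟨c2, hc2⟩, φbad, hφbad⟩ := swap_case hconn hcard ψ0 hψ0
      have hd2 : 2 ≤ d := by
        rcases Nat.lt_or_ge d 2 with hlt | hge
        · exfalso
          interval_cases d
          · obtain ⟨v⟩ : Nonempty V := Fintype.card_pos_iff.mp (by omega)
            exact (cV v).elim0
          · exact hφbad (hd φbad ⟨fun v => Subsingleton.elim _ _,
              fun e => Subsingleton.elim _ _⟩)
        · exact hge
      have h2mem : (2 : ℕ) ∈ SSet := ⟨c2, hc2⟩
      calc distinguishingNumber (subdivisionGraph G) ≤ 2 := Nat.sInf_le h2mem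
      _ ≤ d := hd2
    · push_neg at hsw
      apply Nat.sInf_le
      refine ⟨Sum.elim cV cE, ?_⟩
      intro ψ hpres
      exact side_preserving_ptwise cV cE hd ψ (fun x => hsw ψ x) hpres
  apply le_antisymm
  · have hmem := Nat.sInf_mem hSne
    exact Nat.sInf_le (hsub _ hmem)
  · have htne : TSet.Nonempty := ⟨_, hsub _ (Nat.sInf_mem hSne)⟩
    exact key _ (Nat.sInf_mem htne)
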